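/- Let X be a complex Banach space and suppose that f : [0,∞) → X is almost anti-periodic. Then there exists a unique almost anti-periodic function F : ℝ → X such that F(t) = f(t) for all t ≥ 0. -/

import Mathlib

/-- A set `S` of (positive) real numbers is relatively dense. -/
def RelativelyDense (S : Set ℝ) : Prop :=
  ∃ l > 0, ∀ a : ℝ, 0 ≤ a → ∃ τ ∈ S, a ≤ τ ∧ τ ≤ a + l

/-- `f` is almost anti-periodic on `I`. -/
def AlmostAntiPeriodicOn {X : Type*} [NormedAddCommGroup X] (I : Set ℝ) (f : ℝ → X) : Prop :=
  ∀ ε > 0, RelativelyDense {τ : ℝ | 0 < τ ∧ ∀ t ∈ I, ‖f (t + τ) + f t‖ ≤ ε}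

/-- An almost anti-periodic function on `[0,∞)` has a unique almost anti-periodic
extension to the whole real line. -/
theorem unique_almostAntiPeriodic_extension
    {X : Type*} [NormedAddCommGroup X] [NormedSpace ℂ X] [CompleteSpace X]
    (f : ℝ → X) (hf : ContinuousOn f (Set.Ici (0 : ℝ)))
    (h : AlmostAntiPeriodicOn (Set.Ici (0 : ℝ)) f) :
    ∃! F : ℝ → X, Continuous F ∧ AlmostAntiPeriodicOn Set.univ F ∧
      ∀ t : ℝ, 0 ≤ t → F t = f t := by
  classical
  -- a sequence of anti-periods τ n with τ n ≥ n and quality 1/(n+1)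
  have hseq : ∀ n : ℕ, ∃ τ : ℝ, 0 < τ ∧ (n : ℝ) ≤ τ ∧
      ∀ t : ℝ, 0 ≤ t → ‖f (t + τ) + f t‖ ≤ 1 / (n + 1) := by
    intro n
    obtain ⟨l, hl, hld⟩ := h (1 / (n + 1)) (by positivity)
    obtain ⟨τ, hτS, hτ1, _⟩ := hld n (Nat.cast_nonneg n)
    exact ⟨τ, hτS.1, hτ1, fun t ht => hτS.2 t ht⟩
  choose τ hτpos hτge hτap using hseq
  -- basic estimate between two anti-periods
  have est : ∀ t : ℝ, ∀ n m : ℕ, -t ≤ τ n → -t ≤ τ m →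
      ‖f (t + τ n) - f (t + τ m)‖ ≤ 1 / (n + 1) + 1 / (m + 1) := by
    intro t n m hn hm
    have h1 : ‖f ((t + τ m) + τ n) + f (t + τ m)‖ ≤ 1 / (n + 1) :=
      hτap n _ (by linarith)
    have h2 : ‖f ((t + τ n) + τ m) + f (t + τ n)‖ ≤ 1 / (m + 1) :=
      hτap m _ (by linarith)
    have harg : (t + τ m) + τ n = (t + τ n) + τ m := by ring
    rw [harg] at h1
    calc ‖f (t + τ n) - f (t + τ m)‖
        = ‖(f ((t + τ n) + τ m) + f (t + τ n)) - (f ((t + τ n) + τ m) + f (t + τ m))‖ := by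
          congr 1; abel
      _ ≤ ‖f ((t + τ n) + τ m) + f (t + τ n)‖ + ‖f ((t + τ n) + τ m) + f (t + τ m)‖ :=
          norm_sub_le _ _
      _ ≤ 1 / (n + 1) + 1 / (m + 1) := by linarith
  -- the sequence n ↦ -f (t + τ n) is Cauchy
  have hcau : ∀ t : ℝ, CauchySeq (fun n : ℕ => -f (t + τ n)) := by
    intro t
    rw [Metric.cauchySeq_iff]
    intro ε hε
    obtain ⟨N, hN⟩ := exists_nat_gt (max (-t) (2 / ε))
    refine ⟨N, fun n hn m hm => ?_⟩
    have hNn : (N : ℝ) ≤ n := by exact_mod_cast hn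
    have hNm : (N : ℝ) ≤ m := by exact_mod_cast hm
    have h1 : -t ≤ τ n := le_trans (le_trans (le_max_left _ _) (le_of_lt hN))
      (le_trans hNn (hτge n))
    have h2 : -t ≤ τ m := le_trans (le_trans (le_max_left _ _) (le_of_lt hN))
      (le_trans hNm (hτge m))
    have hb := est t n m h1 h2
    have hεN : 2 / ε < (N : ℝ) := lt_of_le_of_lt (le_max_right _ _) hN
    have hε2 : 1 / ((n : ℝ) + 1) < ε / 2 := by
      rw [div_lt_iff₀ (by positivity)]
      rw [div_lt_iff₀ hε] at hεN
      nlinarith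
    have hε3 : 1 / ((m : ℝ) + 1) < ε / 2 := by
      rw [div_lt_iff₀ (by positivity)]
      rw [div_lt_iff₀ hε] at hεN
      nlinarith
    have : dist (-f (t + τ n)) (-f (t + τ m)) = ‖f (t + τ n) - f (t + τ m)‖ := by
      rw [dist_eq_norm]
      rw [show -f (t + τ n) - -f (t + τ m) = -(f (t + τ n) - f (t + τ m)) by abel, norm_neg]
    rw [this]
    linarith
  have hFex : ∀ t : ℝ, ∃ L : X, Filter.Tendsto (fun n : ℕ => -f (t + τ n))
      Filter.atTop (nhds L) := fun t => cauchySeq_tendsto_of_complete (hcau t)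
  choose F hF using hFex
  -- the key approximation
  have key : ∀ t : ℝ, ∀ n : ℕ, -t ≤ τ n → ‖F t + f (t + τ n)‖ ≤ 1 / (n + 1) := by
    intro t n hn
    have ht1 : Filter.Tendsto (fun m : ℕ => ‖(-f (t + τ m)) - (-f (t + τ n))‖)
        Filter.atTop (nhds ‖F t - (-f (t + τ n))‖) :=
      ((hF t).sub tendsto_const_nhds).norm
    have ht2 : Filter.Tendsto (fun m : ℕ => 1 / (n + 1) + 1 / ((m : ℝ) + 1))
        Filter.atTop (nhds (1 / (n + 1) + 0)) :=
      tendsto_const_nhds.add tendsto_one_div_add_atTop_nhds_zero_nat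
    have hle : ‖F t - (-f (t + τ n))‖ ≤ 1 / (n + 1) + 0 := by
      refine le_of_tendsto_of_tendsto ht1 ht2 ?_
      filter_upwards [Filter.eventually_ge_atTop ⌈-t⌉₊] with m hm
      have h1 : -t ≤ τ m := by
        refine le_trans (Nat.le_ceil (-t)) (le_trans ?_ (hτge m))
        exact_mod_cast hm
      have : ‖(-f (t + τ m)) - (-f (t + τ n))‖ = ‖f (t + τ n) - f (t + τ m)‖ := by
        rw [show (-f (t + τ m)) - (-f (t + τ n)) = f (t + τ n) - f (t + τ m) by abel]
      rw [this]
      have := est t n m hn h1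
      linarith
    rw [show F t - (-f (t + τ n)) = F t + f (t + τ n) by abel] at hle
    linarith
  -- helper to pick good n
  have pick : ∀ t : ℝ, ∀ δ : ℝ, 0 < δ → ∃ n : ℕ, -t ≤ τ n ∧ 2 / ((n : ℝ) + 1) ≤ δ := by
    intro t δ hδ
    obtain ⟨n, hn⟩ := exists_nat_gt (max (-t) (2 / δ))
    refine ⟨n, le_trans (le_trans (le_max_left _ _) (le_of_lt hn)) (hτge n), ?_⟩
    have h2 : 2 / δ < (n : ℝ) := lt_of_le_of_lt (le_max_right _ _) hn
    rw [div_le_iff₀ (by positivity)]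
    rw [div_lt_iff₀ hδ] at h2
    nlinarith
  -- F extends f
  have hFeq : ∀ t : ℝ, 0 ≤ t → F t = f t := by
    intro t ht
    have hb : ∀ δ > 0, ‖F t - f t‖ ≤ 0 + δ := by
      intro δ hδ
      obtain ⟨n, hn1, hn2⟩ := pick t δ hδ
      have k1 := key t n hn1
      have k2 := hτap n t ht
      have : ‖F t - f t‖ ≤ 1 / (n + 1) + 1 / (n + 1) := by
        calc ‖F t - f t‖ = ‖(F t + f (t + τ n)) - (f (t + τ n) + f t)‖ := by congr 1; abel
          _ ≤ ‖F t + f (t + τ n)‖ + ‖f (t + τ n) + f t‖ := norm_sub_le _ _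
          _ ≤ 1 / (n + 1) + 1 / (n + 1) := by linarith
      have h22 : 1 / ((n : ℝ) + 1) + 1 / ((n : ℝ) + 1) = 2 / ((n : ℝ) + 1) := by ring
      rw [h22] at this
      linarith
    have : ‖F t - f t‖ ≤ 0 := le_of_forall_pos_le_add hb
    have : F t - f t = 0 := by
      have := le_antisymm this (norm_nonneg _)
      exact norm_eq_zero.mp this
    exact sub_eq_zero.mp this
  -- continuity
  have hFcont : Continuous F := by
    rw [continuous_iff_continuousAt]
    intro t0
    set R : ℝ := |t0| + 1 with hRdef
    have hmem : Set.Ici (-R) ∈ nhds t0 := by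
      refine Ici_mem_nhds ?_
      have := neg_abs_le t0
      simp only [hRdef]
      linarith
    have huc : TendstoUniformlyOn (fun (n : ℕ) (t : ℝ) => -f (t + τ n)) F
        Filter.atTop (Set.Ici (-R)) := by
      rw [Metric.tendstoUniformlyOn_iff]
      intro ε hε
      obtain ⟨N, hN⟩ := exists_nat_gt (max R (1 / ε))
      filter_upwards [Filter.eventually_ge_atTop N] with n hn
      intro t ht
      have hNn : (N : ℝ) ≤ n := by exact_mod_cast hn
      have h1 : -t ≤ τ n := by
        have : -t ≤ R := by simpa using neg_le_neg (Set.mem_Ici.mp ht)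
        exact le_trans this (le_trans (le_of_lt (lt_of_le_of_lt (le_max_left _ _) hN))
          (le_trans hNn (hτge n)))
      have hk := key t n h1
      have : dist (F t) (-f (t + τ n)) = ‖F t + f (t + τ n)‖ := by
        rw [dist_eq_norm, sub_neg_eq_add]
      rw [this]
      have hεN : 1 / ε < (N : ℝ) := lt_of_le_of_lt (le_max_right _ _) hN
      have : 1 / ((n : ℝ) + 1) < ε := by
        rw [div_lt_iff₀ (by positivity)]
        rw [div_lt_iff₀ hε] at hεN
        nlinarith
      linarith
    have hcontn : ∀ᶠ n : ℕ in Filter.atTop,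
        ContinuousOn (fun t : ℝ => -f (t + τ n)) (Set.Ici (-R)) := by
      filter_upwards [Filter.eventually_ge_atTop ⌈R⌉₊] with n hn
      have hRn : R ≤ τ n := by
        refine le_trans (Nat.le_ceil R) (le_trans ?_ (hτge n))
        exact_mod_cast hn
      refine ContinuousOn.neg ?_
      refine ContinuousOn.comp hf ((continuous_id.add continuous_const).continuousOn) ?_
      intro t ht
      have : -R ≤ t := ht
      simp only [Set.mem_Ici]
      linarith
    exact (huc.continuousOn hcontn.frequently).continuousAt hmem
  -- F is almost anti-periodic on ℝ
  have hFap : AlmostAntiPeriodicOn Set.univ F := by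
    intro ε hε
    obtain ⟨l, hl, hld⟩ := h ε hε
    refine ⟨l, hl, fun a ha => ?_⟩
    obtain ⟨σ, ⟨hσpos, hσ⟩, ha1, ha2⟩ := hld a ha
    refine ⟨σ, ⟨hσpos, fun t _ => ?_⟩, ha1, ha2⟩
    refine le_of_forall_pos_le_add (fun δ hδ => ?_)
    obtain ⟨n, hn1, hn2⟩ := pick t δ hδ
    have k1 := key t n hn1
    have k2 : ‖F (t + σ) + f ((t + σ) + τ n)‖ ≤ 1 / (n + 1) :=
      key (t + σ) n (by linarith)
    have k3 : ‖f ((t + τ n) + σ) + f (t + τ n)‖ ≤ ε := hσ (t + τ n) (by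
      simp only [Set.mem_Ici]; linarith)
    have harg : (t + σ) + τ n = (t + τ n) + σ := by ring
    rw [harg] at k2
    have : ‖F (t + σ) + F t‖ ≤ 1 / (n + 1) + 1 / (n + 1) + ε := by
      calc ‖F (t + σ) + F t‖
          = ‖((F (t + σ) + f ((t + τ n) + σ)) + (F t + f (t + τ n)))
              - (f ((t + τ n) + σ) + f (t + τ n))‖ := by congr 1; abel
        _ ≤ ‖(F (t + σ) + f ((t + τ n) + σ)) + (F t + f (t + τ n))‖
              + ‖f ((t + τ n) + σ) + f (t + τ n)‖ := norm_sub_le _ _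
        _ ≤ (‖F (t + σ) + f ((t + τ n) + σ)‖ + ‖F t + f (t + τ n)‖)
              + ‖f ((t + τ n) + σ) + f (t + τ n)‖ := by
            gcongr; exact norm_add_le _ _
        _ ≤ 1 / (n + 1) + 1 / (n + 1) + ε := by linarith
    have h22 : 1 / ((n : ℝ) + 1) + 1 / ((n : ℝ) + 1) = 2 / ((n : ℝ) + 1) := by ring
    rw [h22] at this
    linarith
  refine ⟨F, ⟨hFcont, hFap, hFeq⟩, ?_⟩
  rintro G ⟨-, hGap, hGeq⟩
  funext t
  have habs : ∀ ε > 0, ‖G t - F t‖ ≤ 4 * ε := by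
    intro ε hε
    obtain ⟨l1, hl1, hd1⟩ := hGap ε hε
    obtain ⟨σ1, ⟨hσ1pos, hσ1⟩, hσ1ge, -⟩ := hd1 |t| (abs_nonneg t)
    obtain ⟨l2, hl2, hd2⟩ := hFap ε hε
    obtain ⟨σ2, ⟨hσ2pos, hσ2⟩, hσ2ge, -⟩ := hd2 |t| (abs_nonneg t)
    have ht1 : 0 ≤ t + σ1 := by linarith [neg_abs_le t]
    have ht2 : 0 ≤ t + σ2 := by linarith [neg_abs_le t]
    have e1 : ‖f (t + σ1) + G t‖ ≤ ε := by
      have := hσ1 t (Set.mem_univ t)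
      rwa [hGeq _ ht1] at this
    have e2 : ‖f (t + σ2) + F t‖ ≤ ε := by
      have := hσ2 t (Set.mem_univ t)
      rwa [hFeq _ ht2] at this
    have fap1 : ∀ s : ℝ, 0 ≤ s → ‖f (s + σ1) + f s‖ ≤ ε := by
      intro s hs
      have := hσ1 s (Set.mem_univ s)
      rwa [hGeq _ (by linarith), hGeq _ hs] at this
    have fap2 : ∀ s : ℝ, 0 ≤ s → ‖f (s + σ2) + f s‖ ≤ ε := by
      intro s hs
      have := hσ2 s (Set.mem_univ s)
      rwa [hFeq _ (by linarith), hFeq _ hs] at this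
    have c1 : ‖f ((t + σ2) + σ1) + f (t + σ2)‖ ≤ ε := fap1 _ ht2
    have c2 : ‖f ((t + σ1) + σ2) + f (t + σ1)‖ ≤ ε := fap2 _ ht1
    have harg : (t + σ2) + σ1 = (t + σ1) + σ2 := by ring
    rw [harg] at c1
    have e3 : ‖f (t + σ1) - f (t + σ2)‖ ≤ 2 * ε := by
      calc ‖f (t + σ1) - f (t + σ2)‖
          = ‖(f ((t + σ1) + σ2) + f (t + σ1)) - (f ((t + σ1) + σ2) + f (t + σ2))‖ := by
            congr 1; abel
        _ ≤ ‖f ((t + σ1) + σ2) + f (t + σ1)‖ + ‖f ((t + σ1) + σ2) + f (t + σ2)‖ :=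
            norm_sub_le _ _
        _ ≤ 2 * ε := by linarith
    calc ‖G t - F t‖
        = ‖((f (t + σ1) + G t) - (f (t + σ2) + F t)) - (f (t + σ1) - f (t + σ2))‖ := by
          congr 1; abel
      _ ≤ ‖(f (t + σ1) + G t) - (f (t + σ2) + F t)‖ + ‖f (t + σ1) - f (t + σ2)‖ :=
          norm_sub_le _ _
      _ ≤ (‖f (t + σ1) + G t‖ + ‖f (t + σ2) + F t‖) + ‖f (t + σ1) - f (t + σ2)‖ := by
          gcongr; exact norm_sub_le _ _
      _ ≤ 4 * ε := by linarith
  have hle : ‖G t - F t‖ ≤ 0 := by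
    refine le_of_forall_pos_le_add (fun δ hδ => ?_)
    have := habs (δ / 4) (by linarith)
    linarith
  have : G t - F t = 0 := norm_eq_zero.mp (le_antisymm hle (norm_nonneg _))
  exact sub_eq_zero.mp this
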